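/- With Γ²₂ = y₃/x₃, Γ²₃ = y₂/x₃, Γ³₂ = -y₂/x₃, Γ³₃ = y₃/x₃ and all other Γⁱⱼ = 0, define the horizontal vector fields hᵢ = ∂/∂xᵢ - Γᵐᵢ ∂/∂yᵐ on the region x₃ ≠ 0 of ℝ³×ℝ³. Then the Lie bracket [h₂, h₃] equals -(y₃/x₃²) ∂/∂y₂ + (y₂/x₃²) ∂/∂y₃; in particular [h₂,h₃] is a purely vertical vector field and is nonzero whenever y₂² + y₃² ≠ 0. -/

import Mathlib

noncomputable section

/-- Lie bracket of vector fields on ℝ³ × ℝ³: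
[X,Y](p) = DY(p)·X(p) - DX(p)·Y(p). -/
def lieBracket (X Y : (Fin 3 → ℝ) × (Fin 3 → ℝ) → (Fin 3 → ℝ) × (Fin 3 → ℝ))
    (p : (Fin 3 → ℝ) × (Fin 3 → ℝ)) : (Fin 3 → ℝ) × (Fin 3 → ℝ) :=
  fderiv ℝ Y p (X p) - fderiv ℝ X p (Y p)

/-- The horizontal vector field h₂ = ∂/∂x₂ - (y₃/x₃) ∂/∂y₂ + (y₂/x₃) ∂/∂y₃
(0-based: base direction 1). -/
def hField2 (p : (Fin 3 → ℝ) × (Fin 3 → ℝ)) : (Fin 3 → ℝ) × (Fin 3 → ℝ) :=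
  (Pi.single 1 1, ![0, -(p.2 2) / p.1 2, p.2 1 / p.1 2])

/-- The horizontal vector field h₃ = ∂/∂x₃ - (y₂/x₃) ∂/∂y₂ - (y₃/x₃) ∂/∂y₃
(0-based: base direction 2). -/
def hField3 (p : (Fin 3 → ℝ) × (Fin 3 → ℝ)) : (Fin 3 → ℝ) × (Fin 3 → ℝ) :=
  (Pi.single 2 1, ![0, -(p.2 1) / p.1 2, -(p.2 2) / p.1 2])

open ContinuousLinearMap

abbrev E3 := (Fin 3 → ℝ) × (Fin 3 → ℝ)

def Lx2 : E3 →L[ℝ] ℝ := (proj 2).comp (fst ℝ (Fin 3 → ℝ) (Fin 3 → ℝ))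
def Ly (j : Fin 3) : E3 →L[ℝ] ℝ := (proj j).comp (snd ℝ (Fin 3 → ℝ) (Fin 3 → ℝ))

lemma quot_deriv (p : E3) (hx : p.1 2 ≠ 0) (j : Fin 3) :
    HasFDerivAt (fun q : E3 => q.2 j / q.1 2)
      ((p.1 2)⁻¹ • Ly j - (p.2 j / (p.1 2) ^ 2) • Lx2) p := by
  have h1 : HasFDerivAt (fun q : E3 => q.2 j) (Ly j) p := (Ly j).hasFDerivAt
  have h2 : HasFDerivAt (fun q : E3 => q.1 2) Lx2 p := Lx2.hasFDerivAt
  have hinv : HasFDerivAt (fun q : E3 => (q.1 2)⁻¹)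
      ((-ContinuousLinearMap.mulLeftRight ℝ ℝ (p.1 2)⁻¹ (p.1 2)⁻¹).comp Lx2) p :=
    (hasFDerivAt_inv' hx).comp p h2
  have h3 : HasFDerivAt (fun q : E3 => q.2 j * (q.1 2)⁻¹)
      (p.2 j • ((-ContinuousLinearMap.mulLeftRight ℝ ℝ (p.1 2)⁻¹ (p.1 2)⁻¹).comp Lx2) + (p.1 2)⁻¹ • Ly j) p :=
    h1.mul hinv
  simp only [div_eq_mul_inv]
  refine h3.congr_fderiv ?_
  refine ContinuousLinearMap.ext fun v => ?_
  simp [Ly, Lx2, ContinuousLinearMap.mulLeftRight_apply]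
  field_simp
  ring

def D3 (p : E3) : E3 →L[ℝ] E3 :=
  (0 : E3 →L[ℝ] (Fin 3 → ℝ)).prod
    (pi ![0, -((p.1 2)⁻¹ • Ly 1 - (p.2 1 / (p.1 2) ^ 2) • Lx2),
            -((p.1 2)⁻¹ • Ly 2 - (p.2 2 / (p.1 2) ^ 2) • Lx2)])

def D2 (p : E3) : E3 →L[ℝ] E3 :=
  (0 : E3 →L[ℝ] (Fin 3 → ℝ)).prod
    (pi ![0, -((p.1 2)⁻¹ • Ly 2 - (p.2 2 / (p.1 2) ^ 2) • Lx2),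
            ((p.1 2)⁻¹ • Ly 1 - (p.2 1 / (p.1 2) ^ 2) • Lx2)])

lemma hasD3 (p : E3) (hx : p.1 2 ≠ 0) : HasFDerivAt hField3 (D3 p) p := by
  unfold hField3 D3
  apply HasFDerivAt.prodMk
  · exact hasFDerivAt_const _ _
  · apply hasFDerivAt_pi''
    intro i
    fin_cases i
    · simpa using hasFDerivAt_const (0 : ℝ) p
    · simpa [neg_div, Pi.neg_def] using (quot_deriv p hx 1).neg
    · simpa [neg_div, Pi.neg_def] using (quot_deriv p hx 2).neg

lemma hasD2 (p : E3) (hx : p.1 2 ≠ 0) : HasFDerivAt hField2 (D2 p) p := by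
  unfold hField2 D2
  apply HasFDerivAt.prodMk
  · exact hasFDerivAt_const _ _
  · apply hasFDerivAt_pi''
    intro i
    fin_cases i
    · simpa using hasFDerivAt_const (0 : ℝ) p
    · simpa [neg_div, Pi.neg_def] using (quot_deriv p hx 2).neg
    · simpa using quot_deriv p hx 1

/-- [h₂,h₃] = -(y₃/x₃²) ∂/∂y₂ + (y₂/x₃²) ∂/∂y₃ is purely
vertical, and nonzero whenever y₂² + y₃² ≠ 0. -/
theorem stmt_9 (p : (Fin 3 → ℝ) × (Fin 3 → ℝ)) (hx : p.1 2 ≠ 0) :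
    lieBracket hField2 hField3 p =
      (0, ![0, -(p.2 2) / (p.1 2) ^ 2, p.2 1 / (p.1 2) ^ 2]) ∧
    (lieBracket hField2 hField3 p).1 = 0 ∧
    ((p.2 1) ^ 2 + (p.2 2) ^ 2 ≠ 0 → lieBracket hField2 hField3 p ≠ 0) := by
  have key : lieBracket hField2 hField3 p =
      (0, ![0, -(p.2 2) / (p.1 2) ^ 2, p.2 1 / (p.1 2) ^ 2]) := by
    unfold lieBracket
    rw [(hasD3 p hx).fderiv, (hasD2 p hx).fderiv]
    unfold D3 D2 hField2 hField3
    refine Prod.ext (by simp) ?_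
    funext i
    fin_cases i <;>
      simp [pi_apply, Ly, Lx2, Pi.single_apply] <;> field_simp <;> ring
  refine ⟨key, by rw [key], fun hy hzero => ?_⟩
  rw [key] at hzero
  have h1 : -(p.2 2) / (p.1 2) ^ 2 = 0 := by
    have := congrFun (congrArg Prod.snd hzero) 1
    simpa using this
  have h2 : p.2 1 / (p.1 2) ^ 2 = 0 := by
    have := congrFun (congrArg Prod.snd hzero) 2
    simpa using this
  have hx2 : (p.1 2) ^ 2 ≠ 0 := pow_ne_zero _ hx
  have e1 : p.2 2 = 0 := by
    field_simp at h1; simpa using h1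
  have e2 : p.2 1 = 0 := by
    field_simp at h2; simpa using h2
  exact hy (by rw [e1, e2]; ring)

end
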